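/- If x* maximizes the unit-normed element r* over the unit ball in a Hilbert space H (i.e., x* = r*/‖r*‖) and x̂ = r̂/‖r̂‖ for another nonzero element r̂, then the excess risk ⟨r*, x*⟩ − ⟨r*, x̂⟩ is at most ‖r* − r̂‖²/(2‖r̂‖). -/

import Mathlib

open RealInnerProductSpace

theorem stmt_2 {H : Type*} [NormedAddCommGroup H] [InnerProductSpace ℝ H]
    (rstar rhat : H) (hstar : rstar ≠ 0) (hhat : rhat ≠ 0) :
    ⟪rstar, ‖rstar‖⁻¹ • rstar⟫ - ⟪rstar, ‖rhat‖⁻¹ • rhat⟫ ≤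
      ‖rstar - rhat‖ ^ 2 / (2 * ‖rhat‖) := by
  have ha : (0:ℝ) < ‖rstar‖ := norm_pos_iff.mpr hstar
  have hb : (0:ℝ) < ‖rhat‖ := norm_pos_iff.mpr hhat
  rw [real_inner_smul_right, real_inner_smul_right, real_inner_self_eq_norm_sq,
    @norm_sub_sq_real, le_div_iff₀ (by positivity)]
  have h1 : ‖rstar‖⁻¹ * ‖rstar‖ ^ 2 = ‖rstar‖ := by field_simp
  rw [h1]
  have h3 : ‖rhat‖⁻¹ * (inner ℝ rstar rhat : ℝ) * ‖rhat‖ = inner ℝ rstar rhat := by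
    field_simp
  nlinarith [h3, sq_nonneg (‖rstar‖ - ‖rhat‖), mul_pos ha hb]
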